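/- The function μ ↦ ξ(t,μ) = t[φ(t−μ) + φ(t+μ)] + Φ̄(t−μ) + Φ(−t−μ) is even in μ and nondecreasing for 0 ≤ μ ≤ t. -/

import Mathlib

open MeasureTheory Set

/-- Standard Gaussian density. -/
noncomputable def gphi (v : ℝ) : ℝ := (Real.sqrt (2 * Real.pi))⁻¹ * Real.exp (-v ^ 2 / 2)

/-- Standard Gaussian upper tail probability. -/
noncomputable def PhiBar (v : ℝ) : ℝ := ∫ x in Set.Ioi v, gphi x

/-- Standard Gaussian CDF. -/
noncomputable def Phi (v : ℝ) : ℝ := ∫ x in Set.Iic v, gphi x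

noncomputable def xi (t μ : ℝ) : ℝ :=
  t * (gphi (t - μ) + gphi (t + μ)) + PhiBar (t - μ) + Phi (-t - μ)

lemma gphi_cont : Continuous gphi := by
  unfold gphi; fun_prop

lemma gphi_pos (v : ℝ) : 0 < gphi v := by
  unfold gphi
  have : 0 < Real.sqrt (2 * Real.pi) := Real.sqrt_pos.2 (by positivity)
  positivity

lemma gphi_even (v : ℝ) : gphi (-v) = gphi v := by unfold gphi; ring_nf

lemma gphi_integrable : Integrable gphi := by
  have h : Integrable (fun v : ℝ => Real.exp (-(1/2 : ℝ) * v ^ 2)) := by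
    exact integrable_exp_neg_mul_sq (by norm_num)
  have h2 := h.const_mul (Real.sqrt (2 * Real.pi))⁻¹
  have he : gphi = fun v : ℝ => (Real.sqrt (2 * Real.pi))⁻¹ * Real.exp (-(1/2 : ℝ) * v ^ 2) := by
    funext v
    unfold gphi
    congr 1
    ring
  rw [he]
  exact h2

lemma hasDerivAt_gphi (v : ℝ) : HasDerivAt gphi (-v * gphi v) v := by
  have h1 : HasDerivAt (fun v : ℝ => -v ^ 2 / 2) (-v) v := by
    have := ((hasDerivAt_pow 2 v).neg).div_const 2
    simpa using this.congr_deriv (by ring)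
  have h2 := (h1.exp).const_mul (Real.sqrt (2 * Real.pi))⁻¹
  unfold gphi
  refine h2.congr_deriv ?_
  ring

lemma Phi_neg (v : ℝ) : Phi (-v) = PhiBar v := by
  unfold Phi PhiBar
  rw [← integral_comp_neg_Ioi]
  simp_rw [gphi_even]

lemma hasDerivAt_Phi (v : ℝ) : HasDerivAt Phi (gphi v) v := by
  have key : ∀ u : ℝ, Phi u = Phi 0 + ∫ x in (0:ℝ)..u, gphi x := by
    intro u
    have := intervalIntegral.integral_Iic_sub_Iic (f := gphi) (μ := volume)
      (gphi_integrable.integrableOn) (gphi_integrable.integrableOn) (a := 0) (b := u)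
    unfold Phi; linarith
  have hD : HasDerivAt (fun u => Phi 0 + ∫ x in (0:ℝ)..u, gphi x) (gphi v) v := by
    exact (intervalIntegral.integral_hasDerivAt_right
      (gphi_integrable.intervalIntegrable)
      (gphi_cont.stronglyMeasurableAtFilter _ _) gphi_cont.continuousAt).const_add _
  exact hD.congr_of_eventuallyEq (Filter.Eventually.of_forall key)

lemma hasDerivAt_PhiBar (v : ℝ) : HasDerivAt PhiBar (-gphi v) v := by
  have key : ∀ u : ℝ, PhiBar u = (∫ x, gphi x) - Phi u := by
    intro u
    have := intervalIntegral.integral_Iic_add_Ioi (f := gphi) (μ := volume) (b := u)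
      (gphi_integrable.integrableOn) (gphi_integrable.integrableOn)
    unfold Phi PhiBar; linarith
  have hD : HasDerivAt (fun u => (∫ x, gphi x) - Phi u) (-gphi v) v := by
    simpa using (hasDerivAt_Phi v).const_sub _
  exact hD.congr_of_eventuallyEq (Filter.Eventually.of_forall key)

lemma gphi_shift (t μ : ℝ) : gphi (t - μ) = Real.exp (2 * t * μ) * gphi (t + μ) := by
  unfold gphi
  rw [mul_left_comm, ← Real.exp_add]
  congr 2
  ring

lemma hasDerivAt_xi (t μ : ℝ) :
    HasDerivAt (xi t)
      (gphi (t + μ) * (Real.exp (2 * t * μ) * (1 + t * (t - μ)) - (1 + t * (t + μ)))) μ := by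
  have h1 : HasDerivAt (fun x : ℝ => t - x) (-1) μ := (hasDerivAt_id μ).const_sub t
  have h2 : HasDerivAt (fun x : ℝ => t + x) 1 μ := by
    simpa using (hasDerivAt_id μ).const_add t
  have h3 : HasDerivAt (fun x : ℝ => -t - x) (-1) μ := (hasDerivAt_id μ).const_sub (-t)
  have g1 := (hasDerivAt_gphi (t - μ)).comp μ h1
  have g2 := (hasDerivAt_gphi (t + μ)).comp μ h2
  have p1 := (hasDerivAt_PhiBar (t - μ)).comp μ h1
  have p2 := (hasDerivAt_Phi (-t - μ)).comp μ h3
  have total := (((g1.add g2).const_mul t).add p1).add p2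
  have : xi t = fun μ =>
      t * (gphi (t - μ) + gphi (t + μ)) + PhiBar (t - μ) + Phi (-t - μ) := rfl
  rw [this]
  refine total.congr_deriv ?_
  have he : gphi (-t - μ) = gphi (t + μ) := by
    rw [show -t - μ = -(t + μ) by ring, gphi_even]
  rw [he, gphi_shift t μ]
  ring

theorem stmt12 (t : ℝ) (ht : 0 < t) :
    (∀ μ : ℝ, xi t (-μ) = xi t μ) ∧ MonotoneOn (xi t) (Set.Icc 0 t) := by
  constructor
  · intro μ
    unfold xi
    rw [show t - -μ = t + μ by ring, show t + -μ = t - μ by ring,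
      show -t - -μ = -(t - μ) by ring, show -t - μ = -(t + μ) by ring,
      Phi_neg, Phi_neg]
    have h1 : PhiBar (t + μ) = Phi (-(t + μ)) := (Phi_neg (t + μ)).symm
    have h2 : PhiBar (t - μ) = Phi (-(t - μ)) := (Phi_neg (t - μ)).symm
    ring
  · have hdiff : ∀ μ : ℝ, DifferentiableAt ℝ (xi t) μ :=
      fun μ => (hasDerivAt_xi t μ).differentiableAt
    apply monotoneOn_of_deriv_nonneg (convex_Icc 0 t)
    · exact fun μ _ => (hdiff μ).continuousAt.continuousWithinAt
    · exact fun μ _ => (hdiff μ).differentiableWithinAt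
    · intro μ hμ
      rw [interior_Icc] at hμ
      obtain ⟨hμ0, hμt⟩ := hμ
      rw [(hasDerivAt_xi t μ).deriv]
      have hexp : 1 + 2 * t * μ ≤ Real.exp (2 * t * μ) := by
        have := Real.add_one_le_exp (2 * t * μ); linarith
      have hpos : (0:ℝ) ≤ 1 + t * (t - μ) := by nlinarith
      have h2 : (1 + 2 * t * μ) * (1 + t * (t - μ)) ≤
          Real.exp (2 * t * μ) * (1 + t * (t - μ)) :=
        mul_le_mul_of_nonneg_right hexp hpos
      have h3 : 1 + t * (t + μ) ≤ (1 + 2 * t * μ) * (1 + t * (t - μ)) := by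
        nlinarith [mul_nonneg (mul_nonneg ht.le hμ0.le) (mul_nonneg ht.le (sub_nonneg.2 hμt.le))]
      have := (gphi_pos (t + μ)).le
      nlinarith
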